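/- arXiv:1904.12135 — 3 statements merged into one kernel-verified Lean document; each statement's English description precedes it below -/
import Mathlib

section
/- Every positive integer n has a unique representation n = ∑_{i=1}^{k} a_i f_i with a_i ∈ {0,1}, a_k = 1, and no two consecutive a_i equal to 1 (i.e., a_i = 1 implies a_{i+1} = 0), where f is the Fibonacci sequence with f_0 = f_1 = 1 (Zeckendorf representation using f_1 = 1, f_2 = 2, f_3 = 3, f_4 = 5, …). -/
open List Nat

local instance : IsTrans ℕ fun a b ↦ b + 2 ≤ a where
  trans _a _b _c hba hcb := hcb.trans <| le_self_add.trans hba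

lemma zek_mem_pairwise {l : List ℕ} (h : l.IsZeckendorfRep) :
    (∀ a ∈ l, 2 ≤ a) ∧ l.Pairwise (fun a b => b + 2 ≤ a) := by
  rw [IsZeckendorfRep, List.isChain_iff_pairwise, List.pairwise_append] at h
  obtain ⟨h1, -, h3⟩ := h
  exact ⟨fun a ha => by simpa using h3 a ha 0 (by simp), h1⟩

lemma zek_key (S : Finset ℕ) (h1 : ∀ i ∈ S, 1 ≤ i) (h2 : ∀ i ∈ S, i + 1 ∉ S) :
    Nat.zeckendorf (∑ i ∈ S, Nat.fib (i + 1)) = ((S.sort (· ≤ ·)).map (· + 1)).reverse := by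
  have hsorted : (S.sort (· ≤ ·)).Pairwise (· < ·) := S.sortedLT_sort.pairwise
  have hpair : (S.sort (· ≤ ·)).Pairwise (fun a b => a + 2 ≤ b) := by
    refine hsorted.imp_of_mem ?_
    intro a b ha hb hab
    have haS : a ∈ S := (Finset.mem_sort _).1 ha
    have hbS : b ∈ S := (Finset.mem_sort _).1 hb
    have hne : b ≠ a + 1 := fun h => h2 a haS (h ▸ hbS)
    omega
  have hrep : (((S.sort (· ≤ ·)).map (· + 1)).reverse).IsZeckendorfRep := by
    rw [IsZeckendorfRep, ← List.reverse_cons, List.isChain_iff_pairwise,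
      List.pairwise_reverse, List.pairwise_cons]
    constructor
    · intro b hb
      simp only [List.mem_map] at hb
      obtain ⟨i, hi, rfl⟩ := hb
      have := h1 i ((Finset.mem_sort _).1 hi)
      omega
    · rw [List.pairwise_map]
      exact hpair.imp (by omega)
  have hsum : ((((S.sort (· ≤ ·)).map (· + 1)).reverse).map Nat.fib).sum
      = ∑ i ∈ S, Nat.fib (i + 1) := by
    rw [List.map_reverse, List.sum_reverse, List.map_map]
    have := ((S.sort_perm_toList (· ≤ ·)).map (fun i => Nat.fib (i + 1))).sum_eq
    rw [Function.comp_def, this, ← List.sum_toFinset _ S.nodup_toList]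
    simp
  rw [← hsum]
  exact Nat.zeckendorf_sum_fib hrep

theorem zeckendorf_unique
    (f : ℕ → ℕ)
    (hf0 : f 0 = 1) (hf1 : f 1 = 1)
    (hf : ∀ n, f (n+2) = f (n+1) + f n) :
    ∀ n : ℕ, 0 < n →
      ∃! S : Finset ℕ, (∀ i ∈ S, 1 ≤ i) ∧ (∀ i ∈ S, i + 1 ∉ S) ∧
        n = ∑ i ∈ S, f i := by
  have hfib : ∀ i, f i = Nat.fib (i + 1) := by
    intro i
    induction i using Nat.strong_induction_on with
    | _ i ih =>
      match i with
      | 0 => simpa using hf0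
      | 1 => simpa using hf1
      | (k+2) =>
        rw [hf, ih (k+1) (by omega), ih k (by omega)]
        show Nat.fib (k+1+1) + Nat.fib (k+1) = Nat.fib (k+1+2)
        have e := Nat.fib_add_two (n := k+1)
        omega
  intro n hn
  set l := Nat.zeckendorf n with hl
  obtain ⟨hmem, hpair⟩ := zek_mem_pairwise (Nat.isZeckendorfRep_zeckendorf n)
  have hnd : (l.map (· - 1)).Nodup := by
    rw [List.Nodup, List.pairwise_map]
    refine hpair.imp_of_mem ?_
    intro a b ha hb h
    have := hmem a ha
    have := hmem b hb
    omega
  refine ⟨(l.map (· - 1)).toFinset, ⟨?_, ?_, ?_⟩, ?_⟩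
  · intro i hi
    simp only [List.mem_toFinset, List.mem_map] at hi
    obtain ⟨a, ha, rfl⟩ := hi
    have := hmem a ha
    omega
  · intro i hi hi'
    simp only [List.mem_toFinset, List.mem_map] at hi hi'
    obtain ⟨a, ha, h1⟩ := hi
    obtain ⟨b, hb, h2⟩ := hi'
    have hA := hmem a ha
    have hB := hmem b hb
    have hsym : ∀ x ∈ l, ∀ y ∈ l, x ≠ y → (y + 2 ≤ x ∨ x + 2 ≤ y) := by
      have := hpair.imp (fun {x y} h => Or.inl h :
        ∀ {x y : ℕ}, y + 2 ≤ x → (y + 2 ≤ x ∨ x + 2 ≤ y))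
      intro x hx y hy hxy
      haveI hs : Std.Symm (fun x y : ℕ => y + 2 ≤ x ∨ x + 2 ≤ y) := ⟨fun x y h => h.symm⟩
      exact this.forall hx hy hxy
    rcases eq_or_ne a b with rfl | hab
    · omega
    · have := hsym a ha b hb hab
      omega
  · rw [List.sum_toFinset _ hnd, List.map_map]
    have : (l.map (f ∘ (· - 1))) = l.map Nat.fib := by
      refine List.map_congr_left ?_
      intro a ha
      have := hmem a ha
      simp only [Function.comp_apply, hfib]
      congr 1
      omega
    rw [this, Nat.sum_zeckendorf_fib]
  · rintro T ⟨hT1, hT2, hTsum⟩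
    have hsum' : ∑ i ∈ T, Nat.fib (i + 1) = n := by
      rw [hTsum]
      exact Finset.sum_congr rfl fun i _ => (hfib i).symm
    have hkey := zek_key T hT1 hT2
    rw [hsum', ← hl] at hkey
    rw [hkey]
    rw [List.map_reverse, List.toFinset_reverse, List.map_map]
    have : ((T.sort (· ≤ ·)).map ((· - 1) ∘ (· + 1))) = T.sort (· ≤ ·) := by
      simp [Function.comp_def]
    rw [this, Finset.sort_toFinset]
end

section
/- Every positive integer n can be written as n = ∑_{j=1}^{k} a_j w_j with digits a_j ∈ {0,1,2}, where w is defined by w_1 = 1, w_2 = 3, w_{n+2} = 3 w_{n+1} − w_n (the golden sequence of the white Fibonacci tree: 1, 3, 8, 21, 55, …). -/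
theorem golden_representation_exists
    (w : ℕ → ℕ)
    (hw1 : w 1 = 1) (hw2 : w 2 = 3)
    (hw : ∀ n, w (n+2) + w n = 3 * w (n+1)) :
    ∀ n : ℕ, 1 ≤ n → ∃ k : ℕ, 1 ≤ k ∧ ∃ a : ℕ → ℕ,
      (∀ j, a j ≤ 2) ∧ n = ∑ j ∈ Finset.Icc 1 k, a j * w j := by
  have hpos : ∀ n, 1 ≤ w (n+1) ∧ w (n+1) ≤ w (n+2) := by
    intro n
    induction n with
    | zero => simp [hw1, hw2]
    | succ m ih =>
      have h : w (m+3) + w (m+1) = 3 * w (m+2) := hw (m+1)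
      show 1 ≤ w (m+2) ∧ w (m+2) ≤ w (m+3)
      omega
  have hB : ∀ k, w (k+1) ≤ 2 * (∑ j ∈ Finset.Icc 1 k, w j) + 1 := by
    intro k
    induction k with
    | zero => simp [hw1]
    | succ m ih =>
      have h := hw m
      rw [Finset.sum_Icc_succ_top (by omega : 1 ≤ m+1)]
      show w (m+2) ≤ _
      omega
  have key : ∀ k, ∀ n, n ≤ 2 * (∑ j ∈ Finset.Icc 1 k, w j) →
      ∃ a : ℕ → ℕ, (∀ j, a j ≤ 2) ∧ n = ∑ j ∈ Finset.Icc 1 k, a j * w j := by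
    intro k
    induction k with
    | zero =>
      intro n hn
      simp at hn
      exact ⟨fun _ => 0, fun _ => by simp, by simp [hn]⟩
    | succ m ih =>
      intro n hn
      rw [Finset.sum_Icc_succ_top (by omega : 1 ≤ m+1)] at hn
      have hBm := hB m
      set S := ∑ j ∈ Finset.Icc 1 m, w j with hS
      have hd : ∃ d : ℕ, d ≤ 2 ∧ d * w (m+1) ≤ n ∧ n - d * w (m+1) ≤ 2 * S := by
        by_cases h0 : n ≤ 2 * S
        · exact ⟨0, by omega, by omega, by omega⟩
        · by_cases h1 : n ≤ w (m+1) + 2 * S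
          · exact ⟨1, by omega, by omega, by omega⟩
          · exact ⟨2, by omega, by omega, by omega⟩
      obtain ⟨d, hd2, hdn, hrem⟩ := hd
      obtain ⟨a, ha2, ha⟩ := ih (n - d * w (m+1)) hrem
      refine ⟨fun j => if j = m+1 then d else a j,
        fun j => by dsimp; split <;> [exact hd2; exact ha2 j], ?_⟩
      rw [Finset.sum_Icc_succ_top (by omega : 1 ≤ m+1)]
      have hne : ∀ j ∈ Finset.Icc 1 m, (if j = m+1 then d else a j) * w j = a j * w j := by
        intro j hj
        simp only [Finset.mem_Icc] at hj
        rw [if_neg (by omega)]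
      rw [Finset.sum_congr rfl hne]
      show n = _ + (if m+1 = m+1 then d else a (m+1)) * w (m+1)
      rw [if_pos rfl]
      omega
  intro n hn
  refine ⟨n, hn, ?_⟩
  apply key
  have hle : n ≤ ∑ j ∈ Finset.Icc 1 n, w j := by
    calc n = ∑ j ∈ Finset.Icc 1 n, 1 := by simp
    _ ≤ ∑ j ∈ Finset.Icc 1 n, w j := by
        apply Finset.sum_le_sum
        intro j hj
        simp only [Finset.mem_Icc] at hj
        obtain ⟨j', rfl⟩ : ∃ j', j = j'+1 := ⟨j-1, by omega⟩
        exact (hpos j').1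
  omega
end

section
/- Every positive integer has a unique representation n = ∑_{j=1}^{k} a_j w_j with digits a_j ∈ {0,1,2} avoiding the forbidden pattern 2 1* 2 (i.e., there are no indices p < q with a_p = 2, a_q = 2, and a_r = 1 for all p < r < q), where w_1 = 1, w_2 = 3, w_{n+2} = 3 w_{n+1} − w_n. -/
namespace GoldenAux

def Val (w : ℕ → ℕ) (k : ℕ) (a : ℕ → ℕ) : ℕ := ∑ j ∈ Finset.Icc 1 k, a j * w j

def Pat (a : ℕ → ℕ) : Prop := ∀ p q, p < q → a p = 2 → a q = 2 → ∃ r, p < r ∧ r < q ∧ a r ≠ 1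

def Unb (k : ℕ) (a : ℕ → ℕ) : Prop :=
  ∀ p, 1 ≤ p → p ≤ k → a p = 2 → ∃ r, p < r ∧ r ≤ k ∧ a r ≠ 1

theorem Val_zero (w : ℕ → ℕ) (a : ℕ → ℕ) : Val w 0 a = 0 := by
  simp [Val]

theorem Val_succ (w : ℕ → ℕ) (k : ℕ) (a : ℕ → ℕ) :
    Val w (k+1) a = Val w k a + a (k+1) * w (k+1) :=
  Finset.sum_Icc_succ_top (by omega) _

theorem Val_update (w : ℕ → ℕ) (k j d : ℕ) (a : ℕ → ℕ) (h : k < j) :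
    Val w k (Function.update a j d) = Val w k a := by
  refine Finset.sum_congr rfl fun i hi => ?_
  rw [Finset.mem_Icc] at hi
  rw [Function.update_of_ne (by omega)]

section W
variable {w : ℕ → ℕ} (hw1 : w 1 = 1) (hw2 : w 2 = 3)
  (hw : ∀ n, w (n+2) + w n = 3 * w (n+1))

include hw1 hw2 hw

theorem wmono : ∀ k, w k ≤ w (k+1) := by
  intro k
  induction k with
  | zero => have h0 := hw 0; have e : w (0+1) = w 1 := rfl; have e2 : w (0+2) = w 2 := rfl; omega
  | succ k ih =>
    have := hw k; have e : w (k+1+1) = w (k+2) := rfl; omega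

theorem wpos : ∀ k, 1 ≤ w (k+1) := by
  intro k
  induction k with
  | zero => have e : w (0+1) = w 1 := rfl; omega
  | succ k ih =>
    have := wmono hw1 hw2 hw k; have := hw k
    have e : w (k+1+1) = w (k+2) := rfl; omega

theorem wge1 : ∀ k, k + 1 ≤ w (k+1) := by
  intro k
  induction k with
  | zero => have e : w (0+1) = w 1 := rfl; omega
  | succ k ih =>
    have := wmono hw1 hw2 hw k; have := hw k
    have e : w (k+1+1) = w (k+2) := rfl; omega

theorem bounds : ∀ k (a : ℕ → ℕ), (∀ j, a j ≤ 2) → Pat a →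
    Val w k a < w (k+1) ∧ (Unb k a → Val w k a + w k < w (k+1)) := by
  intro k
  induction k with
  | zero =>
    intro a _ _
    have h0 := hw 0
    have e : w (0+1) = w 1 := rfl
    have e2 : w (0+2) = w 2 := rfl
    rw [Val_zero]
    omega
  | succ k ih =>
    intro a ha hp
    obtain ⟨hall, hunb⟩ := ih a ha hp
    have hrec := Val_succ w k a
    have hmk := wmono hw1 hw2 hw k
    have hwk := hw k
    have e : w (k+1+1) = w (k+2) := rfl
    have hd : a (k+1) = 0 ∨ a (k+1) = 1 ∨ a (k+1) = 2 := by have := ha (k+1); omega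
    constructor
    · rcases hd with h | h | h
      · rw [h] at hrec; omega
      · rw [h] at hrec; omega
      · have hu : Unb k a := by
          intro p hp1 hpk hp2
          obtain ⟨r, h1, h2, h3⟩ := hp p (k+1) (by omega) hp2 h
          exact ⟨r, h1, by omega, h3⟩
        have := hunb hu
        rw [h] at hrec
        omega
    · intro hu
      have h2 : a (k+1) ≠ 2 := by
        intro he
        obtain ⟨r, h1, h2, _⟩ := hu (k+1) (by omega) (by omega) he
        omega
      rcases hd with h | h | h
      · rw [h] at hrec; omega
      · have hu' : Unb k a := by
          intro p hp1 hpk hp2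
          obtain ⟨r, h1, h2, h3⟩ := hu p hp1 (by omega) hp2
          have : r ≠ k+1 := by intro he; rw [he, h] at h3; omega
          exact ⟨r, h1, by omega, h3⟩
        have := hunb hu'
        rw [h] at hrec
        omega
      · exact absurd h h2

theorem uniq : ∀ k (a b : ℕ → ℕ), (∀ j, a j ≤ 2) → (∀ j, b j ≤ 2) → Pat a → Pat b →
    Val w k a = Val w k b → ∀ j, 1 ≤ j → j ≤ k → a j = b j := by
  intro k
  induction k with
  | zero => intro a b _ _ _ _ _ j h1 h2; omega
  | succ k ih =>
    intro a b ha hb hpa hpb hval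
    have hra := Val_succ w k a
    have hrb := Val_succ w k b
    have hA := (bounds hw1 hw2 hw k a ha hpa).1
    have hB := (bounds hw1 hw2 hw k b hb hpb).1
    have hW := wpos hw1 hw2 hw k
    have hda : a (k+1) = 0 ∨ a (k+1) = 1 ∨ a (k+1) = 2 := by have := ha (k+1); omega
    have hdb : b (k+1) = 0 ∨ b (k+1) = 1 ∨ b (k+1) = 2 := by have := hb (k+1); omega
    have key : a (k+1) = b (k+1) ∧ Val w k a = Val w k b := by
      rcases hda with h | h | h <;> rcases hdb with h' | h' | h' <;>
        rw [h] at hra <;> rw [h'] at hrb <;> exact ⟨by omega, by omega⟩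
    intro j hj1 hjk
    rcases Nat.lt_or_ge j (k+1) with hlt | hge
    · exact ih a b ha hb hpa hpb key.2 j hj1 (by omega)
    · have : j = k+1 := by omega
      rw [this]; exact key.1

end W

theorem pat_update_le_one (a : ℕ → ℕ) (k d : ℕ) (hd : d ≤ 1)
    (hs : ∀ j, (j < 1 ∨ k < j) → a j = 0) (hp : Pat a) :
    Pat (Function.update a (k+1) d) := by
  intro p q hpq hp2 hq2
  have hqne : q ≠ k+1 := by
    intro e; rw [e, Function.update_self] at hq2; omega
  have hpne : p ≠ k+1 := by
    intro e; rw [e, Function.update_self] at hp2; omega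
  rw [Function.update_of_ne hqne] at hq2
  rw [Function.update_of_ne hpne] at hp2
  have hqk : q ≤ k := by
    by_contra hc
    have : a q = 0 := hs q (by omega)
    omega
  obtain ⟨r, h1, h2, h3⟩ := hp p q hpq hp2 hq2
  exact ⟨r, h1, h2, by rwa [Function.update_of_ne (by omega)]⟩

theorem pat_update_two (a : ℕ → ℕ) (k : ℕ)
    (hs : ∀ j, (j < 1 ∨ k < j) → a j = 0) (hp : Pat a) (hu : Unb k a) :
    Pat (Function.update a (k+1) 2) := by
  intro p q hpq hp2 hq2
  have hqk : q ≤ k + 1 := by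
    by_contra hc
    rw [Function.update_of_ne (by omega)] at hq2
    have : a q = 0 := hs q (by omega)
    omega
  have hpne : p ≠ k+1 := by omega
  rw [Function.update_of_ne hpne] at hp2
  have hp1 : 1 ≤ p := by
    by_contra hc
    have : a p = 0 := hs p (by omega)
    omega
  rcases Nat.eq_or_lt_of_le hqk with he | hlt
  · obtain ⟨r, h1, h2, h3⟩ := hu p hp1 (by omega) hp2
    exact ⟨r, h1, by omega, by rwa [Function.update_of_ne (by omega)]⟩
  · have hqk' : q ≤ k := by omega
    rw [Function.update_of_ne (by omega)] at hq2
    obtain ⟨r, h1, h2, h3⟩ := hp p q hpq hp2 hq2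
    exact ⟨r, h1, h2, by rwa [Function.update_of_ne (by omega)]⟩

section EX
variable {w : ℕ → ℕ} (hw1 : w 1 = 1) (hw2 : w 2 = 3)
  (hw : ∀ n, w (n+2) + w n = 3 * w (n+1))

include hw1 hw2 hw

theorem exi : ∀ k,
    (∀ n, n < w (k+1) → ∃ a : ℕ → ℕ, (∀ j, a j ≤ 2) ∧ (∀ j, (j < 1 ∨ k < j) → a j = 0) ∧
      Pat a ∧ Val w k a = n) ∧
    (∀ n, n + w k < w (k+1) → ∃ a : ℕ → ℕ, (∀ j, a j ≤ 2) ∧ (∀ j, (j < 1 ∨ k < j) → a j = 0) ∧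
      Pat a ∧ Unb k a ∧ Val w k a = n) := by
  intro k
  induction k with
  | zero =>
    have h0 := hw 0
    have e : w (0+1) = w 1 := rfl
    have e2 : w (0+2) = w 2 := rfl
    constructor
    · intro n hn
      refine ⟨fun _ => 0, by simp, by simp, ?_, ?_⟩
      · intro p q _ hp2 _; simp at hp2
      · rw [Val_zero]; omega
    · intro n hn
      refine ⟨fun _ => 0, by simp, by simp, ?_, ?_, ?_⟩
      · intro p q _ hp2 _; simp at hp2
      · intro p hp1 hp2 _; omega
      · rw [Val_zero]; omega
  | succ k ih =>
    have hmk := wmono hw1 hw2 hw k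
    have hwk := hw k
    have e : w (k+1+1) = w (k+2) := rfl
    constructor
    · intro n hn
      by_cases h1 : n < w (k+1)
      · obtain ⟨a, ha, hs, hp, hv⟩ := ih.1 n h1
        refine ⟨a, ha, fun j hj => hs j (by omega), hp, ?_⟩
        rw [Val_succ, hs (k+1) (by omega)]
        omega
      · by_cases h2 : n < 2 * w (k+1)
        · obtain ⟨a, ha, hs, hp, hv⟩ := ih.1 (n - w (k+1)) (by omega)
          refine ⟨Function.update a (k+1) 1, ?_, ?_, ?_, ?_⟩
          · intro j
            rcases eq_or_ne j (k+1) with he | he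
            · rw [he, Function.update_self]; omega
            · rw [Function.update_of_ne he]; exact ha j
          · intro j hj
            rw [Function.update_of_ne (by omega)]
            exact hs j (by omega)
          · exact pat_update_le_one a k 1 (by omega) hs hp
          · rw [Val_succ, Val_update w k (k+1) 1 a (by omega), Function.update_self]
            omega
        · obtain ⟨a, ha, hs, hp, hu, hv⟩ := ih.2 (n - 2 * w (k+1)) (by omega)
          refine ⟨Function.update a (k+1) 2, ?_, ?_, ?_, ?_⟩
          · intro j
            rcases eq_or_ne j (k+1) with he | he
            · rw [he, Function.update_self]
            · rw [Function.update_of_ne he]; exact ha j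
          · intro j hj
            rw [Function.update_of_ne (by omega)]
            exact hs j (by omega)
          · exact pat_update_two a k hs hp hu
          · rw [Val_succ, Val_update w k (k+1) 2 a (by omega), Function.update_self]
            omega
    · intro n hn
      by_cases h1 : n < w (k+1)
      · obtain ⟨a, ha, hs, hp, hv⟩ := ih.1 n h1
        refine ⟨a, ha, fun j hj => hs j (by omega), hp, ?_, ?_⟩
        · intro p hp1 hpk hp2
          have hpk' : p ≤ k := by
            rcases Nat.eq_or_lt_of_le hpk with he | _
            · exfalso; rw [he] at hp2; rw [hs (k+1) (by omega)] at hp2; omega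
            · omega
          exact ⟨k+1, by omega, by omega, by rw [hs (k+1) (by omega)]; omega⟩
        · rw [Val_succ, hs (k+1) (by omega)]
          omega
      · obtain ⟨a, ha, hs, hp, hu, hv⟩ := ih.2 (n - w (k+1)) (by omega)
        refine ⟨Function.update a (k+1) 1, ?_, ?_, ?_, ?_, ?_⟩
        · intro j
          rcases eq_or_ne j (k+1) with he | he
          · rw [he, Function.update_self]; omega
          · rw [Function.update_of_ne he]; exact ha j
        · intro j hj
          rw [Function.update_of_ne (by omega)]
          exact hs j (by omega)
        · exact pat_update_le_one a k 1 (by omega) hs hp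
        · intro p hp1 hpk hp2
          have hpne : p ≠ k+1 := by
            intro he; rw [he, Function.update_self] at hp2; omega
          rw [Function.update_of_ne hpne] at hp2
          obtain ⟨r, h1', h2', h3'⟩ := hu p hp1 (by omega) hp2
          exact ⟨r, h1', by omega, by rwa [Function.update_of_ne (by omega)]⟩
        · rw [Val_succ, Val_update w k (k+1) 1 a (by omega), Function.update_self]
          omega

end EX

theorem val_eq_sum (w : ℕ → ℕ) (C : ℕ →₀ ℕ) (h0 : C 0 = 0) (k : ℕ)
    (hk : ∀ j, k < j → C j = 0) :
    C.sum (fun j d => d * w j) = Val w k ⇑C := by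
  rw [Finsupp.sum, Val]
  refine Finset.sum_subset ?_ ?_
  · intro j hj
    rw [Finsupp.mem_support_iff] at hj
    rw [Finset.mem_Icc]
    constructor
    · rcases Nat.eq_zero_or_pos j with he | hpos
      · exact absurd (he ▸ h0) hj
      · omega
    · by_contra hc
      exact hj (hk j (by omega))
  · intro j _ hj
    rw [Finsupp.notMem_support_iff] at hj
    rw [hj, zero_mul]

end GoldenAux

theorem golden_code_unique
    (w : ℕ → ℕ)
    (hw1 : w 1 = 1) (hw2 : w 2 = 3)
    (hw : ∀ n, w (n+2) + w n = 3 * w (n+1)) :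
    ∀ n : ℕ, 1 ≤ n →
      ∃! a : ℕ →₀ ℕ,
        a 0 = 0 ∧ (∀ j, a j ≤ 2) ∧
        n = a.sum (fun j d => d * w j) ∧
        ¬ ∃ p q : ℕ, p < q ∧ a p = 2 ∧ a q = 2 ∧
            (∀ r, p < r → r < q → a r = 1) := by
  intro n hn
  open GoldenAux in
  have hnlt : n < w (n+1) := by have := wge1 hw1 hw2 hw n; omega
  obtain ⟨a, ha, hs, hp, hv⟩ := (GoldenAux.exi hw1 hw2 hw n).1 n hnlt
  set A : ℕ →₀ ℕ := Finsupp.onFinset (Finset.Icc 1 n) a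
    (fun j hj => by rw [Finset.mem_Icc]; by_contra hc; exact hj (hs j (by omega))) with hA
  have hAcoe : ⇑A = a := rfl
  have hA0 : A 0 = 0 := by rw [hAcoe]; exact hs 0 (by omega)
  have hAsum : A.sum (fun j d => d * w j) = n := by
    rw [GoldenAux.val_eq_sum w A hA0 n (fun j hj => by rw [hAcoe]; exact hs j (by omega)), hAcoe, hv]
  refine ⟨A, ⟨hA0, fun j => ha j, hAsum.symm, ?_⟩, ?_⟩
  · rintro ⟨p, q, hpq, hp2, hq2, hall⟩
    rw [hAcoe] at hp2 hq2
    obtain ⟨r, h1, h2, h3⟩ := hp p q hpq hp2 hq2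
    exact h3 (hall r h1 h2)
  · rintro B ⟨hB0, hB2, hBsum, hBpat⟩
    have hPatB : GoldenAux.Pat ⇑B := by
      intro p q hpq hp2 hq2
      by_contra hc
      push_neg at hc
      exact hBpat ⟨p, q, hpq, hp2, hq2, fun r h1 h2 => by
        by_contra hr; exact absurd (hc r h1 h2) (by simpa using hr)⟩
    set k : ℕ := n + B.support.sup id with hk
    have hBhigh : ∀ j, k < j → B j = 0 := by
      intro j hj
      by_contra hc
      have hmem : j ∈ B.support := Finsupp.mem_support_iff.mpr hc
      have : j ≤ B.support.sup id := Finset.le_sup (f := id) hmem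
      omega
    have hBval : GoldenAux.Val w k ⇑B = n := by
      rw [← GoldenAux.val_eq_sum w B hB0 k hBhigh, ← hBsum]
    have hAhigh : ∀ j, k < j → A j = 0 := by
      intro j hj; rw [hAcoe]; exact hs j (by omega)
    have hAval : GoldenAux.Val w k ⇑A = n := by
      rw [← GoldenAux.val_eq_sum w A hA0 k hAhigh, hAsum]
    have heq := GoldenAux.uniq hw1 hw2 hw k ⇑B ⇑A hB2 (fun j => ha j)
      hPatB (by rw [hAcoe]; exact hp) (by rw [hBval, hAval])
    ext j
    rcases Nat.eq_zero_or_pos j with he | hpos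
    · rw [he, hB0, hA0]
    · rcases le_or_gt j k with hle | hgt
      · exact heq j hpos hle
      · rw [hBhigh j hgt, hAhigh j hgt]
end
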